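/- Let k be a positive integer. Every sequence of positive integers of length at least k/2 and with sum less than k is behaving, i.e., its set of nonempty subsequence sums equals {1,2,...,S} where S is its total sum. -/

import Mathlib

/-- The sumset of a list of natural numbers: all sums of nonempty sublists. -/
def sumsetN (l : List ℕ) : Set ℕ :=
  {x | ∃ t : List ℕ, t.Sublist l ∧ t ≠ [] ∧ t.sum = x}

lemma sumsetN_mono {l l' : List ℕ} (h : l.Subperm l') : sumsetN l ⊆ sumsetN l' := by
  rintro x ⟨t, ht, hne, hs⟩
  obtain ⟨t', htp, hts⟩ := ht.subperm.trans h
  exact ⟨t', hts, fun h0 => hne ((h0 ▸ htp).symm.eq_nil), by rw [htp.sum_eq, hs]⟩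

lemma sumsetN_perm {l l' : List ℕ} (h : l.Perm l') : sumsetN l = sumsetN l' :=
  Set.Subset.antisymm (sumsetN_mono h.subperm) (sumsetN_mono h.symm.subperm)

lemma sumsetN_nil : sumsetN ([] : List ℕ) = ∅ := by
  ext x
  simp only [sumsetN, Set.mem_setOf_eq, Set.mem_empty_iff_false, iff_false]
  rintro ⟨t, ht, hne, -⟩
  exact hne (List.sublist_nil.mp ht)

lemma sumsetN_cons (a : ℕ) (t : List ℕ) :
    sumsetN (a :: t) = sumsetN t ∪ {a} ∪ (fun x => a + x) '' sumsetN t := by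
  ext x
  constructor
  · rintro ⟨s, hs, hne, rfl⟩
    cases hs with
    | cons _ h => exact Or.inl (Or.inl ⟨_, h, hne, rfl⟩)
    | cons_cons _ h =>
      rename_i s'
      rcases eq_or_ne s' [] with rfl | hs'
      · exact Or.inl (Or.inr (by simp))
      · exact Or.inr ⟨s'.sum, ⟨s', h, hs', rfl⟩, by simp⟩
  · rintro ((⟨s, hs, hne, rfl⟩ | rfl) | ⟨y, ⟨s, hs, hne, rfl⟩, rfl⟩)
    · exact ⟨s, hs.cons a, hne, rfl⟩
    · exact ⟨[x], (List.nil_sublist t).cons_cons x, by simp, by simp⟩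
    · exact ⟨a :: s, hs.cons_cons a, by simp, by simp⟩

lemma icc_union (m T : ℕ) (h1 : 1 ≤ m) (h2 : m ≤ T + 1) :
    Set.Icc 1 T ∪ {m} ∪ (fun x => m + x) '' Set.Icc 1 T = Set.Icc 1 (m + T) := by
  ext x
  simp only [Set.mem_union, Set.mem_singleton_iff, Set.mem_image, Set.mem_Icc]
  constructor
  · rintro ((⟨a, b⟩ | rfl) | ⟨y, ⟨hy1, hy2⟩, rfl⟩) <;> omega
  · rintro ⟨hx1, hx2⟩
    by_cases hT : x ≤ T
    · exact Or.inl (Or.inl ⟨hx1, hT⟩)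
    · by_cases hxm : x ≤ m
      · exact Or.inl (Or.inr (by omega))
      · exact Or.inr ⟨x - m, ⟨by omega, by omega⟩, by omega⟩

lemma len_le_sum (t : List ℕ) (h : ∀ x ∈ t, 0 < x) : t.length ≤ t.sum := by
  induction t with
  | nil => simp
  | cons a t ih =>
    simp only [List.length_cons, List.sum_cons]
    have h1 := h a (List.mem_cons_self (a := a) (l := t))
    have h2 := ih fun x hx => h x (List.mem_cons_of_mem a hx)
    omega

lemma sum_le_len (t : List ℕ) (h : ∀ x ∈ t, x ≤ 1) : t.sum ≤ t.length := by
  induction t with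
  | nil => simp
  | cons a t ih =>
    simp only [List.length_cons, List.sum_cons]
    have h1 := h a (List.mem_cons_self (a := a) (l := t))
    have h2 := ih fun x hx => h x (List.mem_cons_of_mem a hx)
    omega

lemma key : ∀ n (l : List ℕ), l.length ≤ n → (∀ x ∈ l, 0 < x) →
    l.sum < 2 * l.length → sumsetN l = Set.Icc 1 l.sum := by
  intro n
  induction n with
  | zero =>
    intro l hl _ hs
    have : l = [] := List.length_eq_zero_iff.mp (Nat.le_zero.mp hl)
    subst this
    simp at hs
  | succ n ih =>
    intro l hl hpos hs
    have h0 : l ≠ [] := by rintro rfl; simp at hs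
    have hfne : l.toFinset.Nonempty := by
      rcases List.exists_mem_of_ne_nil l h0 with ⟨a, ha⟩
      exact ⟨a, List.mem_toFinset.mpr ha⟩
    set m := l.toFinset.max' hfne with hmdef
    have hm : m ∈ l := List.mem_toFinset.mp (l.toFinset.max'_mem hfne)
    have hmax : ∀ x ∈ l, x ≤ m := fun x hx => Finset.le_max' _ x (List.mem_toFinset.mpr hx)
    have hperm : l.Perm (m :: l.erase m) := List.perm_cons_erase hm
    set t := l.erase m with htdef
    have hlt : t.length + 1 = l.length := by
      have := hperm.length_eq
      simp only [List.length_cons] at this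
      omega
    have hst : m + t.sum = l.sum := by
      have := hperm.sum_eq
      simp only [List.sum_cons] at this
      omega
    have hpost : ∀ x ∈ t, 0 < x := fun x hx => hpos x (List.mem_of_mem_erase hx)
    have hmaxt : ∀ x ∈ t, x ≤ m := fun x hx => hmax x (List.mem_of_mem_erase hx)
    have hm1 : 1 ≤ m := hpos m hm
    have hts_ge : t.length ≤ t.sum := len_le_sum t hpost
    have hm2 : m ≤ t.sum + 1 := by omega
    have hts : sumsetN t = Set.Icc 1 t.sum := by
      rcases eq_or_ne t [] with hnil | htne
      · rw [hnil, sumsetN_nil]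
        simp
      · apply ih t (by omega) hpost
        have htlen1 : 1 ≤ t.length := by
          have := List.length_pos_iff.mpr htne
          omega
        rcases Nat.lt_or_ge m 2 with hm' | hm'
        · -- m = 1, so all elements are 1
          have h1 : m = 1 := by omega
          have : t.sum ≤ t.length := sum_le_len t fun x hx => by
            have := hmaxt x hx; omega
          omega
        · omega
    calc sumsetN l = sumsetN (m :: t) := sumsetN_perm hperm
      _ = sumsetN t ∪ {m} ∪ (fun x => m + x) '' sumsetN t := sumsetN_cons m t
      _ = Set.Icc 1 t.sum ∪ {m} ∪ (fun x => m + x) '' Set.Icc 1 t.sum := by rw [hts]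
      _ = Set.Icc 1 (m + t.sum) := icc_union m t.sum hm1 hm2
      _ = Set.Icc 1 l.sum := by rw [hst]

theorem stmt7 (k : ℕ) (hk : 0 < k) (l : List ℕ) (hpos : ∀ x ∈ l, 0 < x)
    (hlen : k ≤ 2 * l.length) (hsum : l.sum < k) :
    sumsetN l = Set.Icc 1 l.sum := by
  exact key l.length l le_rfl hpos (by omega)
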